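/- Let f : [a,b] → L(E,B,P) be Kurzweil–Henstock integrable in probability on [a,b], and suppose there exists A ∈ L¹(E,B,P) with A(ω) ≥ 0 for a.e. ω ∈ E such that P({ω ∈ E : |f(t, ω)| ≤ A(ω)}) = 1 for all t ∈ [a,b]. Then the function φ(t) = ∫_E f(t, ω) dP(ω), t ∈ [a,b], is Kurzweil–Henstock integrable on [a,b] and (KH)∫_a^b [∫_E f(t, ω) dP(ω)] dt = ∫_E [(KH)∫_a^b f(t, ω) dt] dP(ω). -/

import Mathlib

open MeasureTheory
open scoped ENNReal

/-- `x 0 < x 1 < ... < x n` is a division of `[a, b]`. -/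
def IsDivision (a b : ℝ) (n : ℕ) (x : ℕ → ℝ) : Prop :=
  0 < n ∧ x 0 = a ∧ x n = b ∧ ∀ i < n, x i < x (i + 1)

/-- The tags `ξ i` belong to the corresponding subintervals `[x i, x (i+1)]`. -/
def ValidTags (n : ℕ) (x ξ : ℕ → ℝ) : Prop :=
  ∀ i < n, ξ i ∈ Set.Icc (x i) (x (i + 1))

/-- Riemann sum `S(f; d, ξ)(ω) = ∑ f(ξ i, ω) (x (i+1) - x i)` of a random function. -/
def randomRiemannSum {Ω : Type*} (f : ℝ → Ω → ℝ) (n : ℕ) (x ξ : ℕ → ℝ) (ω : Ω) : ℝ :=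
  ∑ i ∈ Finset.range n, f (ξ i) ω * (x (i + 1) - x i)

/-- Riemann sum of a real function. -/
def riemannSum (φ : ℝ → ℝ) (n : ℕ) (x ξ : ℕ → ℝ) : ℝ :=
  ∑ i ∈ Finset.range n, φ (ξ i) * (x (i + 1) - x i)

/-- `φ : [a, b] → ℝ` is Kurzweil–Henstock integrable on `[a, b]` with integral `I`:
for all `ε > 0` there is `δ : [a,b] → ℝ₊` such that every division with tags
`ξ i ∈ [x i, x (i+1)]` and `x (i+1) - x i < δ (ξ i)` has Riemann sum within `ε` of `I`. -/
def IsKHIntegral (a b : ℝ) (φ : ℝ → ℝ) (I : ℝ) : Prop :=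
  ∀ ε > (0 : ℝ), ∃ δ : ℝ → ℝ, (∀ t ∈ Set.Icc a b, 0 < δ t) ∧
    ∀ n x ξ, IsDivision a b n x → ValidTags n x ξ →
      (∀ i < n, x (i + 1) - x i < δ (ξ i)) →
      |I - riemannSum φ n x ξ| < ε

/-- `f` is Kurzweil–Henstock integrable in probability on `[a, b]` with integral `I`:
for all `ε, η > 0` there is `δ : [a,b] → ℝ₊` such that for any division with tags
`ξ i ∈ [x i, x (i+1)]` and `x (i+1) - x i < δ (ξ i)`, the Riemann sum is within `ε`
of `I` outside a set of probability less than `η`. -/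
def IsKHIntegralInProb {Ω : Type*} [MeasurableSpace Ω] (P : Measure Ω)
    (a b : ℝ) (f : ℝ → Ω → ℝ) (I : Ω → ℝ) : Prop :=
  ∀ ε > (0 : ℝ), ∀ η > (0 : ℝ), ∃ δ : ℝ → ℝ, (∀ t ∈ Set.Icc a b, 0 < δ t) ∧
    ∀ n x ξ, IsDivision a b n x → ValidTags n x ξ →
      (∀ i < n, x (i + 1) - x i < δ (ξ i)) →
      P {ω | ε ≤ |randomRiemannSum f n x ξ ω - I ω|} < ENNReal.ofReal η

/-! ### Auxiliary lemmas -/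

/-- A `δ`-fine tagged division of `[a, c]` exists. -/
def GoodKH (a : ℝ) (δ : ℝ → ℝ) (c : ℝ) : Prop :=
  ∃ n x ξ, IsDivision a c n x ∧ ValidTags n x ξ ∧ ∀ i < n, x (i + 1) - x i < δ (ξ i)

lemma goodKH_extend {a : ℝ} {δ : ℝ → ℝ} {c s τ : ℝ} (hg : GoodKH a δ c)
    (hcs : c < s) (hτ : τ ∈ Set.Icc c s) (hfine : s - c < δ τ) : GoodKH a δ s := by
  obtain ⟨n, x, ξ, ⟨hn, hx0, hxn, hmono⟩, htags, hf⟩ := hg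
  classical
  set x' : ℕ → ℝ := fun i => if i ≤ n then x i else s with hx'
  set ξ' : ℕ → ℝ := fun i => if i < n then ξ i else τ with hξ'
  have hx'i : ∀ i ≤ n, x' i = x i := fun i hi => by simp [hx', hi]
  have hx'n1 : x' (n + 1) = s := by simp [hx']
  have hξ'i : ∀ i < n, ξ' i = ξ i := fun i hi => by simp [hξ', hi]
  have hξ'n : ξ' n = τ := by simp [hξ']
  refine ⟨n + 1, x', ξ', ⟨Nat.succ_pos n, by rw [hx'i 0 (Nat.zero_le n), hx0], hx'n1, ?_⟩, ?_, ?_⟩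
  · intro i hi
    rcases Nat.lt_succ_iff_lt_or_eq.mp hi with h | h
    · rw [hx'i i h.le, hx'i (i + 1) h]
      exact hmono i h
    · rw [h, hx'i n le_rfl, hx'n1, hxn]; exact hcs
  · intro i hi
    rcases Nat.lt_succ_iff_lt_or_eq.mp hi with h | h
    · rw [hξ'i i h, hx'i i h.le, hx'i (i + 1) h]
      exact htags i h
    · rw [h, hξ'n, hx'i n le_rfl, hx'n1, hxn]; exact hτ
  · intro i hi
    rcases Nat.lt_succ_iff_lt_or_eq.mp hi with h | h
    · rw [hξ'i i h, hx'i i h.le, hx'i (i + 1) h]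
      exact hf i h
    · rw [h, hξ'n, hx'i n le_rfl, hx'n1, hxn]; exact hfine

/-- Cousin's lemma: a `δ`-fine tagged division of `[a, b]` exists for any gauge `δ`. -/
lemma cousin (a b : ℝ) (hab : a < b) (δ : ℝ → ℝ) (hδ : ∀ t ∈ Set.Icc a b, 0 < δ t) :
    ∃ n x ξ, IsDivision a b n x ∧ ValidTags n x ξ ∧ ∀ i < n, x (i + 1) - x i < δ (ξ i) := by
  classical
  have hδa : 0 < δ a := hδ a ⟨le_rfl, hab.le⟩
  set S : Set ℝ := {c | a < c ∧ c ≤ b ∧ GoodKH a δ c} with hS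
  set c₀ : ℝ := min b (a + δ a / 2) with hc₀
  have hc₀a : a < c₀ := lt_min hab (by linarith)
  have hc₀b : c₀ ≤ b := min_le_left _ _
  have hc₀good : GoodKH a δ c₀ := by
    set x' : ℕ → ℝ := fun i => if i = 0 then a else c₀ with hx'
    have h0 : x' 0 = a := by simp [hx']
    have h1 : x' 1 = c₀ := by simp [hx']
    refine ⟨1, x', fun _ => a, ⟨one_pos, h0, h1, ?_⟩, ?_, ?_⟩
    · intro i hi; interval_cases i; rw [h0, h1]; exact hc₀a
    · intro i hi; interval_cases i; rw [h0, h1]; exact ⟨le_rfl, hc₀a.le⟩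
    · intro i hi; interval_cases i
      rw [h0, h1]
      have : c₀ ≤ a + δ a / 2 := min_le_right _ _
      linarith
  have hne : S.Nonempty := ⟨c₀, hc₀a, hc₀b, hc₀good⟩
  have hbdd : BddAbove S := ⟨b, fun c hc => hc.2.1⟩
  set s := sSup S with hs
  have hsa : a < s := lt_of_lt_of_le hc₀a (le_csSup hbdd ⟨hc₀a, hc₀b, hc₀good⟩)
  have hsb : s ≤ b := csSup_le hne fun c hc => hc.2.1
  have hδs : 0 < δ s := hδ s ⟨hsa.le, hsb⟩
  have hsgood : GoodKH a δ s := by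
    obtain ⟨c, hcS, hc⟩ := exists_lt_of_lt_csSup hne
      (show max (s - δ s) a < s from max_lt (by linarith) hsa)
    have hcs : c ≤ s := le_csSup hbdd hcS
    rcases eq_or_lt_of_le hcs with h | h
    · exact h ▸ hcS.2.2
    · refine goodKH_extend hcS.2.2 h ⟨h.le, le_rfl⟩ ?_
      have := lt_of_le_of_lt (le_max_left (s - δ s) a) hc
      linarith
  rcases eq_or_lt_of_le hsb with h | h
  · exact h ▸ hsgood
  · exfalso
    set s' : ℝ := min b (s + δ s / 2) with hs'
    have hss' : s < s' := lt_min h (by linarith)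
    have hs'good : GoodKH a δ s' := goodKH_extend hsgood hss' ⟨le_rfl, hss'.le⟩
      (by have : s' ≤ s + δ s / 2 := min_le_right _ _; linarith)
    have : s' ≤ s := le_csSup hbdd ⟨hsa.trans hss', min_le_left _ _, hs'good⟩
    linarith

lemma isDivision_mono {a b : ℝ} {n : ℕ} {x : ℕ → ℝ} (hd : IsDivision a b n x) :
    ∀ i j, i ≤ j → j ≤ n → x i ≤ x j := by
  intro i j hij hjn
  induction j, hij using Nat.le_induction with
  | base => exact le_rfl
  | succ j hj ih => exact (ih (by omega)).trans (hd.2.2.2 j (by omega)).le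

lemma isDivision_mem_Icc {a b : ℝ} {n : ℕ} {x : ℕ → ℝ} (hd : IsDivision a b n x) :
    ∀ i ≤ n, x i ∈ Set.Icc a b := by
  intro i hi
  constructor
  · rw [← hd.2.1]; exact isDivision_mono hd 0 i (Nat.zero_le i) hi
  · rw [← hd.2.2.1]; exact isDivision_mono hd i n hi le_rfl

lemma tags_mem_Icc {a b : ℝ} {n : ℕ} {x ξ : ℕ → ℝ} (hd : IsDivision a b n x)
    (ht : ValidTags n x ξ) : ∀ i < n, ξ i ∈ Set.Icc a b := by
  intro i hi
  obtain ⟨h1, h2⟩ := ht i hi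
  exact ⟨((isDivision_mem_Icc hd i hi.le).1).trans h1,
    h2.trans (isDivision_mem_Icc hd (i + 1) hi).2⟩

lemma isDivision_telescope {a b : ℝ} {n : ℕ} {x : ℕ → ℝ} (hd : IsDivision a b n x) :
    ∑ i ∈ Finset.range n, (x (i + 1) - x i) = b - a := by
  rw [Finset.sum_range_sub (fun i => x i) n, hd.2.1, hd.2.2.1]

/-- From `P {|g| ≤ A} = 1` (with `g` measurable, `A` a.e. strongly measurable),
deduce the a.e. bound. -/
lemma ae_abs_le_of_prob_one {Ω : Type*} [MeasurableSpace Ω] (P : Measure Ω)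
    [IsProbabilityMeasure P] {g A : Ω → ℝ} (hg : Measurable g)
    (hA : AEStronglyMeasurable A P) (h1 : P {ω | |g ω| ≤ A ω} = 1) :
    ∀ᵐ ω ∂P, |g ω| ≤ A ω := by
  set A' := hA.mk A with hA'
  have hmeas : StronglyMeasurable A' := hA.stronglyMeasurable_mk
  have hae : A =ᵐ[P] A' := hA.ae_eq_mk
  have hset : {ω | |g ω| ≤ A ω} =ᵐ[P] {ω | |g ω| ≤ A' ω} := by
    rw [Filter.eventuallyEq_set]
    filter_upwards [hae] with ω h
    simp [h]
  have h1' : P {ω | |g ω| ≤ A' ω} = 1 := by rw [← measure_congr hset]; exact h1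
  have hms : MeasurableSet {ω | |g ω| ≤ A' ω} := measurableSet_le hg.abs hmeas.measurable
  have h0 : P {ω | |g ω| ≤ A' ω}ᶜ = 0 := (prob_compl_eq_zero_iff hms).mpr h1'
  have hae' : ∀ᵐ ω ∂P, |g ω| ≤ A' ω := by
    rw [ae_iff, ← Set.compl_setOf]
    exact h0
  filter_upwards [hae', hae] with ω h h2
  rw [h2]; exact h

lemma randomRiemannSum_ae_bound {Ω : Type*} [MeasurableSpace Ω] {P : Measure Ω}
    {a b : ℝ} {f : ℝ → Ω → ℝ} {A : Ω → ℝ} (hA0 : ∀ᵐ ω ∂P, 0 ≤ A ω)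
    (hdom' : ∀ t ∈ Set.Icc a b, ∀ᵐ ω ∂P, |f t ω| ≤ A ω)
    {n : ℕ} {x ξ : ℕ → ℝ} (hd : IsDivision a b n x) (ht : ValidTags n x ξ) :
    ∀ᵐ ω ∂P, |randomRiemannSum f n x ξ ω| ≤ (b - a) * A ω := by
  have hall : ∀ᵐ ω ∂P, ∀ i, i < n → |f (ξ i) ω| ≤ A ω := by
    rw [ae_all_iff]
    intro i
    by_cases hi : i < n
    · filter_upwards [hdom' (ξ i) (tags_mem_Icc hd ht i hi)] with ω h
      exact fun _ => h
    · filter_upwards with ω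
      exact fun h => absurd h hi
  filter_upwards [hall, hA0] with ω h h0
  calc |randomRiemannSum f n x ξ ω|
      ≤ ∑ i ∈ Finset.range n, |f (ξ i) ω * (x (i + 1) - x i)| :=
        Finset.abs_sum_le_sum_abs _ _
    _ ≤ ∑ i ∈ Finset.range n, A ω * (x (i + 1) - x i) := by
        apply Finset.sum_le_sum
        intro i hi
        have hΔ : 0 ≤ x (i + 1) - x i := sub_nonneg.mpr (hd.2.2.2 i (Finset.mem_range.mp hi)).le
        rw [abs_mul, abs_of_nonneg hΔ]
        exact mul_le_mul_of_nonneg_right (h i (Finset.mem_range.mp hi)) hΔ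
    _ = A ω * (b - a) := by rw [← Finset.mul_sum, isDivision_telescope hd]
    _ = (b - a) * A ω := mul_comm _ _

lemma I_ae_bound {Ω : Type*} [MeasurableSpace Ω] (P : Measure Ω)
    [IsProbabilityMeasure P] {a b : ℝ} (hab : a < b) {f : ℝ → Ω → ℝ} {I A : Ω → ℝ}
    (hI : IsKHIntegralInProb P a b f I) (hA0 : ∀ᵐ ω ∂P, 0 ≤ A ω)
    (hdom' : ∀ t ∈ Set.Icc a b, ∀ᵐ ω ∂P, |f t ω| ≤ A ω) :
    ∀ᵐ ω ∂P, |I ω| ≤ (b - a) * A ω := by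
  have key : ∀ k : ℕ, ∃ n x ξ, (IsDivision a b n x ∧ ValidTags n x ξ) ∧
      P {ω | 1 / (k + 1 : ℝ) ≤ |randomRiemannSum f n x ξ ω - I ω|}
        < ENNReal.ofReal ((1 / 2 : ℝ) ^ (k + 1)) := by
    intro k
    obtain ⟨δ, hδpos, hδ⟩ := hI (1 / (k + 1 : ℝ)) (by positivity)
      ((1 / 2 : ℝ) ^ (k + 1)) (by positivity)
    obtain ⟨n, x, ξ, hd, ht, hfi⟩ := cousin a b hab δ hδpos
    exact ⟨n, x, ξ, ⟨hd, ht⟩, hδ n x ξ hd ht hfi⟩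
  choose n x ξ hdt hP using key
  set B : ℕ → Set Ω := fun k =>
    {ω | 1 / (k + 1 : ℝ) ≤ |randomRiemannSum f (n k) (x k) (ξ k) ω - I ω|} with hB
  have hsum : ∑' k, P (B k) ≠ ⊤ := by
    have hle : ∀ k, P (B k) ≤ (1 / 2 : ℝ≥0∞) ^ (k + 1) := by
      intro k
      refine (hP k).le.trans (le_of_eq ?_)
      rw [ENNReal.ofReal_pow (by norm_num)]
      congr 1
      rw [ENNReal.ofReal_div_of_pos (by norm_num)]
      norm_num
    have h2 : ∑' k, P (B k) ≤ ∑' k : ℕ, (1 / 2 : ℝ≥0∞) ^ k := by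
      refine (ENNReal.tsum_le_tsum hle).trans (ENNReal.tsum_le_tsum fun k => ?_)
      exact pow_le_pow_of_le_one (by positivity) (by norm_num) (Nat.le_succ k)
    refine ne_top_of_le_ne_top ?_ h2
    rw [ENNReal.tsum_geometric]
    simp [ENNReal.sub_half]
  have hBC := ae_eventually_notMem (μ := P) hsum
  have hSb : ∀ᵐ ω ∂P, ∀ k : ℕ,
      |randomRiemannSum f (n k) (x k) (ξ k) ω| ≤ (b - a) * A ω :=
    ae_all_iff.mpr fun k => randomRiemannSum_ae_bound hA0 hdom' (hdt k).1 (hdt k).2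
  filter_upwards [hBC, hSb] with ω h1 h2
  have htend : Filter.Tendsto (fun k : ℕ => (b - a) * A ω + 1 / (k + 1 : ℝ))
      Filter.atTop (nhds ((b - a) * A ω)) := by
    have h := tendsto_one_div_add_atTop_nhds_zero_nat.const_add ((b - a) * A ω)
    rwa [add_zero] at h
  refine ge_of_tendsto htend ?_
  filter_upwards [h1] with k hk
  have hk' : |randomRiemannSum f (n k) (x k) (ξ k) ω - I ω| < 1 / (k + 1 : ℝ) := by
    by_contra hcon
    exact hk (le_of_not_gt hcon)
  have habs : |I ω| - |randomRiemannSum f (n k) (x k) (ξ k) ω|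
      ≤ |randomRiemannSum f (n k) (x k) (ξ k) ω - I ω| := by
    rw [abs_sub_comm]
    exact abs_sub_abs_le_abs_sub _ _
  have := h2 k
  linarith

/-- **Theorem 3.3 (Fubini type).** Let `f : [a, b] → L(E, B, P)` be Kurzweil–Henstock
integrable in probability on `[a, b]` with integral `I ∈ L(E, B, P)`, and suppose there
is `A ∈ L¹(E, B, P)` with `A ≥ 0` a.e. and `P {ω | |f t ω| ≤ A ω} = 1` for every
`t ∈ [a, b]`. Then `φ (t) = ∫ f (t, ω) dP(ω)` is Kurzweil–Henstock integrable on
`[a, b]` and `(KH)∫_a^b [∫ f (t, ω) dP(ω)] dt = ∫ [(KH)∫_a^b f (t, ω) dt] dP(ω)`. -/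
theorem kh_integral_in_prob_fubini {Ω : Type*} [MeasurableSpace Ω]
    (P : Measure Ω) [IsProbabilityMeasure P] (a b : ℝ) (hab : a < b)
    (f : ℝ → Ω → ℝ) (hf : ∀ t ∈ Set.Icc a b, Measurable (f t))
    (I : Ω → ℝ) (hImeas : Measurable I)
    (hI : IsKHIntegralInProb P a b f I)
    (A : Ω → ℝ) (hA : Integrable A P) (hA0 : ∀ᵐ ω ∂P, 0 ≤ A ω)
    (hdom : ∀ t ∈ Set.Icc a b, P {ω | |f t ω| ≤ A ω} = 1) :
    IsKHIntegral a b (fun t => ∫ ω, f t ω ∂P) (∫ ω, I ω ∂P) := by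
  have hdom' : ∀ t ∈ Set.Icc a b, ∀ᵐ ω ∂P, |f t ω| ≤ A ω := fun t ht =>
    ae_abs_le_of_prob_one P (hf t ht) hA.1 (hdom t ht)
  have hft : ∀ t ∈ Set.Icc a b, Integrable (f t) P := fun t ht =>
    hA.mono' (hf t ht).aestronglyMeasurable
      (by filter_upwards [hdom' t ht] with ω h; rwa [Real.norm_eq_abs])
  have hIb : ∀ᵐ ω ∂P, |I ω| ≤ (b - a) * A ω := I_ae_bound P hab hI hA0 hdom'
  have hIint : Integrable I P := (hA.const_mul (b - a)).mono' hImeas.aestronglyMeasurable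
    (by filter_upwards [hIb] with ω h; rwa [Real.norm_eq_abs])
  intro ε hε
  have hg : Integrable (fun ω => 2 * ((b - a) * A ω)) P := (hA.const_mul (b - a)).const_mul 2
  obtain ⟨ηe, hηe0, hηe⟩ := exists_pos_setLIntegral_lt_of_measure_lt
    (hg.lintegral_lt_top.ne)
    (show ENNReal.ofReal (ε / 2) ≠ 0 by
      simp only [ne_eq, ENNReal.ofReal_eq_zero, not_le]; linarith)
  set η' : ℝ≥0∞ := min 1 ηe with hη'
  have hη'0 : η' ≠ 0 := ne_of_gt (lt_min one_pos hηe0)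
  have hη't : η' ≠ ⊤ := ne_top_of_le_ne_top ENNReal.one_ne_top (min_le_left _ _)
  set η : ℝ := η'.toReal with hηdef
  have hη0 : 0 < η := ENNReal.toReal_pos hη'0 hη't
  obtain ⟨δ, hδpos, hδ⟩ := hI (ε / 2) (by linarith) η hη0
  refine ⟨δ, hδpos, ?_⟩
  intro n x ξ hd ht hfine
  set S : Ω → ℝ := randomRiemannSum f n x ξ with hSdef
  have hξmem : ∀ i ∈ Finset.range n, ξ i ∈ Set.Icc a b := fun i hi =>
    tags_mem_Icc hd ht i (Finset.mem_range.mp hi)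
  have hSmeas : Measurable S := by
    apply Finset.measurable_sum
    intro i hi
    exact (hf (ξ i) (hξmem i hi)).mul_const _
  have hSint : Integrable S P :=
    integrable_finset_sum _ fun i hi => (hft (ξ i) (hξmem i hi)).mul_const _
  have hSb : ∀ᵐ ω ∂P, |S ω| ≤ (b - a) * A ω := randomRiemannSum_ae_bound hA0 hdom' hd ht
  have hRS : riemannSum (fun t => ∫ ω, f t ω ∂P) n x ξ = ∫ ω, S ω ∂P := by
    rw [hSdef]
    unfold riemannSum randomRiemannSum
    rw [integral_finset_sum _ fun i hi => (hft (ξ i) (hξmem i hi)).mul_const _]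
    exact Finset.sum_congr rfl fun i _ => (integral_mul_const _ _).symm
  set G : Set Ω := {ω | ε / 2 ≤ |S ω - I ω|} with hG
  have hGm : MeasurableSet G := measurableSet_le measurable_const (hSmeas.sub hImeas).abs
  have hPG : P G < ENNReal.ofReal η := hδ n x ξ hd ht hfine
  have hPG' : P G < ηe := by
    rw [hηdef, ENNReal.ofReal_toReal hη't] at hPG
    exact lt_of_lt_of_le hPG (min_le_right 1 ηe)
  have hlint : ∫⁻ ω in G, ENNReal.ofReal (2 * ((b - a) * A ω)) ∂P < ENNReal.ofReal (ε / 2) :=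
    hηe G hPG'
  have hIS : Integrable (fun ω => |I ω - S ω|) P := (hIint.sub hSint).abs
  have h1 : ∫ ω in G, |I ω - S ω| ∂P ≤ ∫ ω in G, 2 * ((b - a) * A ω) ∂P := by
    apply setIntegral_mono_ae_restrict hIS.integrableOn hg.integrableOn
    apply ae_restrict_of_ae
    filter_upwards [hIb, hSb] with ω hi hs
    calc |I ω - S ω| ≤ |I ω| + |S ω| := by
          rw [sub_eq_add_neg]
          exact (abs_add_le _ _).trans (by rw [abs_neg])
      _ ≤ 2 * ((b - a) * A ω) := by linarith
  have h2 : ∫ ω in G, 2 * ((b - a) * A ω) ∂P < ε / 2 := by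
    have hnn : 0 ≤ᵐ[P.restrict G] fun ω => 2 * ((b - a) * A ω) := by
      apply ae_restrict_of_ae
      filter_upwards [hA0] with ω h
      have : (0 : ℝ) ≤ b - a := by linarith
      positivity
    rw [integral_eq_lintegral_of_nonneg_ae hnn (hg.1.restrict)]
    exact ENNReal.toReal_lt_of_lt_ofReal hlint
  have h3 : ∫ ω in Gᶜ, |I ω - S ω| ∂P ≤ ε / 2 := by
    have hb : ‖∫ ω in Gᶜ, |I ω - S ω| ∂P‖ ≤ ε / 2 * (P Gᶜ).toReal := by
      refine norm_setIntegral_le_of_norm_le_const (measure_lt_top _ _) ?_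
      intro ω hω
      have : ¬ (ε / 2 ≤ |S ω - I ω|) := hω
      rw [Real.norm_eq_abs, abs_abs, abs_sub_comm]
      linarith [not_le.mp this]
    calc ∫ ω in Gᶜ, |I ω - S ω| ∂P ≤ ‖∫ ω in Gᶜ, |I ω - S ω| ∂P‖ := le_abs_self _
      _ ≤ ε / 2 * (P Gᶜ).toReal := hb
      _ ≤ ε / 2 * 1 := by
          have h4 : (P Gᶜ).toReal ≤ 1 := by
            simpa using ENNReal.toReal_mono ENNReal.one_ne_top prob_le_one
          have h5 : (0:ℝ) ≤ ε / 2 := by linarith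
          exact mul_le_mul_of_nonneg_left h4 h5
      _ = ε / 2 := mul_one _
  have hsplit : ∫ ω, |I ω - S ω| ∂P
      = ∫ ω in G, |I ω - S ω| ∂P + ∫ ω in Gᶜ, |I ω - S ω| ∂P :=
    (integral_add_compl hGm hIS).symm
  have habs : |(∫ ω, I ω ∂P) - riemannSum (fun t => ∫ ω, f t ω ∂P) n x ξ|
      ≤ ∫ ω, |I ω - S ω| ∂P := by
    rw [hRS, ← integral_sub hIint hSint]
    simpa [Real.norm_eq_abs] using norm_integral_le_integral_norm (μ := P) (f := fun ω => I ω - S ω)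
  linarith
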